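/- The language L = { z_k : k ≥ 0 } where z_k = (c·d^1)(c·d^2)⋯(c·d^k)·e·f over alphabet {c, d, e, f} is not context-free. -/

import Mathlib

/-- Abstracted alphabet of the trace language of the 2-counter type `iter`:
`c` stands for `?c`, `d` for `!c`, `e` for `?d`, `f` for `end`. -/
inductive IterSym : Type
  | c | d | e | f
deriving DecidableEq

instance : Fintype IterSym where
  elems := {IterSym.c, IterSym.d, IterSym.e, IterSym.f}
  complete := by intro x; cases x <;> simp

/-- The word `z_k = (c·d^1)(c·d^2)⋯(c·d^k)·e·f`. -/
def zWord (k : ℕ) : List IterSym :=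
  ((List.range k).map fun i => IterSym.c :: List.replicate (i + 1) IterSym.d).flatten ++
    [IterSym.e, IterSym.f]


namespace IterNCF

universe uT uN
variable {T : Type uT}

/-- Parse trees (rose trees labelled by a nonterminal or a terminal leaf). -/
inductive PTree (T : Type uT) (N : Type uN) where
  | leaf (t : T)
  | node (A : N) (c : List (PTree T N))

namespace PTree

variable {N : Type uN}

/-- Root symbol. -/
def sym : PTree T N → Symbol T N
  | leaf t => Symbol.terminal t
  | node A _ => Symbol.nonterminal A

/-- Yield (frontier) of a parse tree. -/
def yield : PTree T N → List T
  | leaf t => [t]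
  | node _ c => (c.attach.map fun x => yield x.1).flatten
decreasing_by
  simp_wf
  have := List.sizeOf_lt_of_mem x.2
  omega

/-- Number of nodes. -/
def size : PTree T N → ℕ
  | leaf _ => 1
  | node _ c => 1 + (c.attach.map fun x => size x.1).sum
decreasing_by
  simp_wf
  have := List.sizeOf_lt_of_mem x.2
  omega

@[simp] lemma yield_leaf (t : T) : (leaf t : PTree T N).yield = [t] := by simp [yield]

@[simp] lemma size_leaf (t : T) : (leaf t : PTree T N).size = 1 := by simp [size]

@[simp] lemma yield_node (A : N) (c : List (PTree T N)) :
    (node A c).yield = (c.map yield).flatten := by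
  unfold yield
  congr 1
  simp

@[simp] lemma size_node (A : N) (c : List (PTree T N)) :
    (node A c).size = 1 + (c.map size).sum := by
  unfold size
  congr 1
  simp

lemma one_le_size (t : PTree T N) : 1 ≤ t.size := by
  cases t <;> simp

lemma size_lt_of_mem {c : List (PTree T N)} {x : PTree T N} (hx : x ∈ c) (A : N) :
    x.size < (node A c).size := by
  have : x.size ≤ (c.map size).sum :=
    List.single_le_sum (by simp) _ (List.mem_map_of_mem (f := size) hx)
  simp only [size_node]; omega

end PTree

end IterNCF
open IterNCF IterNCF.PTree ContextFreeGrammar in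
section
universe uT uN
variable {T : Type uT}

namespace IterNCF

/-- Well-formed parse trees of a grammar. -/
inductive WF (g : ContextFreeGrammar.{uT} T) : PTree T g.NT → Prop
  | leaf (t : T) : WF g (.leaf t)
  | node (r : ContextFreeRule T g.NT) (hr : r ∈ g.rules) (c : List (PTree T g.NT))
      (hc : c.map PTree.sym = r.output) (h : ∀ x ∈ c, WF g x) :
      WF g (.node r.input c)

variable {g : ContextFreeGrammar.{uT} T}

lemma derives_append {a a' b b' : List (Symbol T g.NT)}
    (h1 : g.Derives a a') (h2 : g.Derives b b') : g.Derives (a ++ b) (a' ++ b') :=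
  (h1.append_right b).trans (h2.append_left a')

lemma ctx_step {X mid : List (Symbol T g.NT)} (h : g.Derives X mid)
    (a b : List (Symbol T g.NT)) : g.Derives (a ++ X ++ b) (a ++ mid ++ b) := by
  simpa [List.append_assoc] using ((h.append_right b).append_left a)

/-- Soundness: a well-formed tree's root derives its yield. -/
lemma derives_yield : ∀ (k : ℕ) (t : PTree T g.NT), t.size ≤ k → WF g t →
    g.Derives [t.sym] (t.yield.map Symbol.terminal) := by
  intro k
  induction k with
  | zero => intro t ht; have := t.one_le_size; omega
  | succ k ih =>
    intro t ht hwf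
    cases hwf with
    | leaf t0 => simpa [PTree.sym] using Derives.refl [Symbol.terminal t0]
    | node r hr c hc hcwf =>
      have hstep : g.Produces [Symbol.nonterminal r.input] (c.map PTree.sym) := by
        rw [hc]; exact ⟨r, hr, ContextFreeRule.Rewrites.input_output⟩
      have hlist : ∀ c' : List (PTree T g.NT), (∀ x ∈ c', x ∈ c) →
          g.Derives (c'.map PTree.sym) (((c'.map PTree.yield).flatten).map Symbol.terminal) := by
        intro c' hc'
        induction c' with
        | nil => simpa using Derives.refl ([] : List (Symbol T g.NT))
        | cons x xs ihx =>
          have hx : x ∈ c := hc' x (by simp)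
          have hxk : x.size ≤ k := by
            have := PTree.size_lt_of_mem hx r.input
            simp only [PTree.size_node] at this ht
            omega
          have h1 := ih x hxk (hcwf x hx)
          have h2 := ihx (fun y hy => hc' y (by simp [hy]))
          simpa using derives_append h1 h2
      exact hstep.trans_derives (by simpa [PTree.sym] using hlist c (fun x hx => hx))

/-- Completeness: a derivation to a terminal word yields a list of parse trees. -/
lemma trees_of_derives {s : List (Symbol T g.NT)} {w : List T}
    (h : g.Derives s (w.map Symbol.terminal)) :
    ∃ ts : List (PTree T g.NT), ts.map PTree.sym = s ∧ (∀ x ∈ ts, WF g x) ∧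
      (ts.map PTree.yield).flatten = w := by
  induction h using Relation.ReflTransGen.head_induction_on with
  | refl =>
    refine ⟨w.map PTree.leaf, ?_, ?_, ?_⟩
    · simp [Function.comp, PTree.sym]
    · intro x hx
      simp only [List.mem_map] at hx
      obtain ⟨t0, -, rfl⟩ := hx
      exact WF.leaf t0
    · induction w with
      | nil => simp
      | cons a l ihw => simpa using ihw
  | head hprod _ ih =>
    obtain ⟨ts', hsym, hwf, hyield⟩ := ih
    obtain ⟨r, hr, hrw⟩ := hprod
    obtain ⟨p, q, hpq, hpq'⟩ := hrw.exists_parts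
    rw [hpq', List.append_assoc] at hsym
    obtain ⟨tp, rest, rfl, hsp, hsrest⟩ := List.map_eq_append_iff.mp hsym
    obtain ⟨tr, tq, rfl, hsr, hsq⟩ := List.map_eq_append_iff.mp hsrest
    refine ⟨tp ++ [PTree.node r.input tr] ++ tq, ?_, ?_, ?_⟩
    · simp [hsp, hsr, hsq, hpq, PTree.sym, List.append_assoc]
    · intro x hx
      simp only [List.mem_append, List.mem_singleton] at hx
      rcases hx with (hx | rfl) | hx
      · exact hwf x (by simp [hx])
      · exact WF.node r hr tr hsr (fun y hy => hwf y (by simp [hy]))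
      · exact hwf x (by simp [hx])
    · simp only [List.map_append, List.flatten_append, List.map_cons, List.map_nil,
        List.flatten_cons, List.flatten_nil, PTree.yield_node] at hyield ⊢
      simpa [List.append_assoc] using hyield

end IterNCF
end
namespace IterNCF
section
open ContextFreeGrammar
universe uT uN
variable {T : Type uT} {g : ContextFreeGrammar.{uT} T}

lemma exists_max_nat {α : Type*} (l : List α) (hl : l ≠ []) (f : α → ℕ) :
    ∃ a ∈ l, ∀ b ∈ l, f b ≤ f a := by
  induction l with
  | nil => exact absurd rfl hl
  | cons x xs ih =>
    rcases eq_or_ne xs [] with rfl | hxs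
    · exact ⟨x, by simp, by intro b hb; simp at hb; subst hb; exact le_rfl⟩
    · obtain ⟨a, ha, hmax⟩ := ih hxs
      rcases le_total (f a) (f x) with h | h
      · refine ⟨x, List.mem_cons_self, ?_⟩
        intro b hb
        rcases List.mem_cons.mp hb with rfl | hb
        · exact le_rfl
        · exact (hmax b hb).trans h
      · refine ⟨a, List.mem_cons_of_mem x ha, ?_⟩
        intro b hb
        rcases List.mem_cons.mp hb with rfl | hb
        · exact h
        · exact hmax b hb

lemma derives_yield' (t : PTree T g.NT) (hwf : WF g t) :
    g.Derives [t.sym] (t.yield.map Symbol.terminal) :=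
  derives_yield t.size t le_rfl hwf

lemma derives_yield_list (c : List (PTree T g.NT)) (h : ∀ x ∈ c, WF g x) :
    g.Derives (c.map PTree.sym) (((c.map PTree.yield).flatten).map Symbol.terminal) := by
  induction c with
  | nil => simpa using Derives.refl ([] : List (Symbol T g.NT))
  | cons x xs ih =>
    have h1 := derives_yield' x (h x (by simp))
    have h2 := ih (fun y hy => h y (by simp [hy]))
    simpa using derives_append h1 h2

lemma extract (m n : ℕ)
    (hm : ∀ r ∈ g.rules, r.output.length ≤ m) (hm1 : 1 ≤ m)
    [DecidableEq g.NT] (inputs : Finset g.NT)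
    (hin : ∀ r ∈ g.rules, r.input ∈ inputs) (hn : inputs.card ≤ n) :
    ∀ (k : ℕ) (t : PTree T g.NT), t.size ≤ k → WF g t →
    ∀ (A : g.NT), t.sym = Symbol.nonterminal A →
    ∀ (u z : List T),
      g.Derives [Symbol.nonterminal g.initial]
        (u.map Symbol.terminal ++ [Symbol.nonterminal A] ++ z.map Symbol.terminal) →
    ∀ (seen : Finset g.NT), seen ⊆ inputs →
      (∀ B ∈ seen, ∃ u' v y z', v ++ y ≠ [] ∧
        g.Derives [Symbol.nonterminal g.initial]
          (u'.map Symbol.terminal ++ [Symbol.nonterminal B] ++ z'.map Symbol.terminal) ∧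
        g.Derives [Symbol.nonterminal B]
          (v.map Symbol.terminal ++ [Symbol.nonterminal A] ++ y.map Symbol.terminal) ∧
        u = u' ++ v ∧ z = y ++ z') →
      m ^ (n - seen.card) < t.yield.length →
    ∃ (B : g.NT) (u' v x y z' : List T), v ++ y ≠ [] ∧
      g.Derives [Symbol.nonterminal g.initial]
        (u'.map Symbol.terminal ++ [Symbol.nonterminal B] ++ z'.map Symbol.terminal) ∧
      g.Derives [Symbol.nonterminal B]
        (v.map Symbol.terminal ++ [Symbol.nonterminal B] ++ y.map Symbol.terminal) ∧
      g.Derives [Symbol.nonterminal B] (x.map Symbol.terminal) ∧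
      u ++ t.yield ++ z = u' ++ (v ++ (x ++ (y ++ z'))) := by
  intro k
  induction k with
  | zero => intro t ht; have := t.one_le_size; omega
  | succ k ih =>
    intro t htk hwf A hA u z hGood seen hsub hseen hlen
    by_cases hAseen : A ∈ seen
    · obtain ⟨u', v, y, z', hvy, hB, hBA, hu, hz⟩ := hseen A hAseen
      refine ⟨A, u', v, t.yield, y, z', hvy, hB, hBA, ?_, ?_⟩
      · have := derives_yield' t hwf
        rwa [hA] at this
      · rw [hu, hz]; simp [List.append_assoc]
    · -- t must be a node
      cases t with
      | leaf t0 => simp [PTree.sym] at hA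
      | node A0 c =>
        cases hwf with
        | node r hr c hc hcwf =>
          have hrA : r.input = A := by simpa [PTree.sym] using hA
          subst hrA
          -- basic facts
          have hclen : c.length ≤ m := by
            have := hm r hr
            rw [← hc] at this
            simpa using this
          have hylen : (PTree.node r.input c).yield.length
              = (c.map (fun x => x.yield.length)).sum := by
            simp only [PTree.yield_node, List.length_flatten, List.map_map]
            rfl
          have hcard : seen.card < n := by
            have hss : seen ⊂ inputs :=
              (Finset.ssubset_iff_of_subset hsub).mpr ⟨r.input, hin r hr, hAseen⟩
            exact lt_of_lt_of_le (Finset.card_lt_card hss) hn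
          have hexp : m ^ (n - seen.card) = m * m ^ (n - seen.card - 1) := by
            rw [← pow_succ']
            congr 1
            omega
          -- pick a child of maximal yield length
          have hcne : c ≠ [] := by
            rintro rfl
            rw [hylen] at hlen
            simpa using hlen
          obtain ⟨ch, hch, hchmax⟩ := exists_max_nat c hcne (fun x => x.yield.length)
          have hsum : (PTree.node r.input c).yield.length ≤ m * ch.yield.length := by
            rw [hylen]
            calc (c.map (fun x => x.yield.length)).sum
                ≤ (c.map (fun x => x.yield.length)).length * ch.yield.length := by
                  apply List.sum_le_card_nsmul
                  intro x hx
                  simp only [List.mem_map] at hx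
                  obtain ⟨x0, hx0, rfl⟩ := hx
                  exact hchmax x0 hx0
              _ ≤ m * ch.yield.length := by
                  have : (c.map (fun x => x.yield.length)).length = c.length := by simp
                  rw [this]
                  exact Nat.mul_le_mul_right _ hclen
          have hchbig : m ^ (n - seen.card - 1) < ch.yield.length := by
            have h1 : m * m ^ (n - seen.card - 1) < m * ch.yield.length := by
              rw [← hexp]; exact lt_of_lt_of_le hlen hsum
            exact lt_of_mul_lt_mul_left h1 (Nat.zero_le m)
          have hch2 : 2 ≤ ch.yield.length := by
            have : 1 ≤ m ^ (n - seen.card - 1) := Nat.one_le_pow _ _ hm1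
            omega
          -- the maximal child is a node
          obtain ⟨A', c', hcheq⟩ : ∃ A' c', ch = PTree.node A' c' := by
            cases ch with
            | leaf t0 => simp at hch2
            | node A' c' => exact ⟨A', c', rfl⟩
          obtain ⟨c₁, c₂, rfl⟩ := List.append_of_mem hch
          -- yields of siblings
          set pre := (c₁.map PTree.yield).flatten with hpre_def
          set post := (c₂.map PTree.yield).flatten with hpost_def
          have hyt : (PTree.node r.input (c₁ ++ ch :: c₂)).yield = pre ++ ch.yield ++ post := by
            simp [hpre_def, hpost_def, List.append_assoc]
          -- the one-level context derivation
          have hchsym : ch.sym = Symbol.nonterminal A' := by rw [hcheq]; rfl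
          have hstep : g.Derives [Symbol.nonterminal r.input]
              (pre.map Symbol.terminal ++ [Symbol.nonterminal A'] ++ post.map Symbol.terminal) := by
            have hprod : g.Produces [Symbol.nonterminal r.input] ((c₁ ++ ch :: c₂).map PTree.sym) := by
              rw [hc]
              exact ⟨r, hr, ContextFreeRule.Rewrites.input_output⟩
            have h1 := derives_yield_list c₁ (fun x hx => hcwf x (by simp [hx]))
            have h2 := derives_yield_list c₂ (fun x hx => hcwf x (by simp [hx]))
            have hmid : g.Derives ((c₁ ++ ch :: c₂).map PTree.sym)
                (pre.map Symbol.terminal ++ [Symbol.nonterminal A'] ++ post.map Symbol.terminal) := by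
              have := derives_append h1 (derives_append (ContextFreeGrammar.Derives.refl [ch.sym]) h2)
              simpa [hpre_def, hpost_def, hchsym, List.append_assoc] using this
            exact hprod.trans_derives hmid
          have hwfch : WF g ch := hcwf ch hch
          have hchk : ch.size ≤ k := by
            have := PTree.size_lt_of_mem hch r.input
            omega
          have hchA : ch.sym = Symbol.nonterminal A' := hchsym
          -- the new root context
          have hGood' : g.Derives [Symbol.nonterminal g.initial]
              ((u ++ pre).map Symbol.terminal ++ [Symbol.nonterminal A']
                ++ ((post ++ z)).map Symbol.terminal) := by
            have := hGood.trans (ctx_step hstep (u.map Symbol.terminal) (z.map Symbol.terminal))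
            simpa [List.map_append, List.append_assoc] using this
          by_cases hpp : pre ++ post = ([] : List T)
          · -- no drop: recurse with the same `seen`
            obtain ⟨hpre0, hpost0⟩ := List.append_eq_nil_iff.mp hpp
            have hyeq : (PTree.node r.input (c₁ ++ ch :: c₂)).yield = ch.yield := by
              rw [hyt, hpre0, hpost0]; simp
            have hseen' : ∀ B ∈ seen, ∃ u' v y z', v ++ y ≠ [] ∧
                g.Derives [Symbol.nonterminal g.initial]
                  (u'.map Symbol.terminal ++ [Symbol.nonterminal B] ++ z'.map Symbol.terminal) ∧
                g.Derives [Symbol.nonterminal B]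
                  (v.map Symbol.terminal ++ [Symbol.nonterminal A'] ++ y.map Symbol.terminal) ∧
                u ++ pre = u' ++ v ∧ post ++ z = y ++ z' := by
              intro B hB
              obtain ⟨u', v, y, z', hvy, hB1, hB2, hu, hz⟩ := hseen B hB
              refine ⟨u', v, y, z', hvy, hB1, ?_, by rw [hpre0, hu]; simp,
                by rw [hpost0, hz]; simp⟩
              have := hB2.trans (ctx_step hstep (v.map Symbol.terminal) (y.map Symbol.terminal))
              rw [hpre0, hpost0] at this
              simpa using this
            have hGood'' := hGood'
            rw [hpre0, hpost0] at hGood''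
            have hlen' : m ^ (n - seen.card) < ch.yield.length := by rw [← hyeq]; exact hlen
            obtain ⟨B, u', v, x, y, z', h1, h2, h3, h4, h5⟩ :=
              ih ch hchk hwfch A' hchA (u ++ pre) (post ++ z) hGood' seen hsub hseen' hlen'
            refine ⟨B, u', v, x, y, z', h1, h2, h3, h4, ?_⟩
            rw [hyeq]
            rw [hpre0, hpost0] at h5
            simpa using h5
          · -- strict drop: recurse with `insert r.input seen`
            have hsub' : insert r.input seen ⊆ inputs :=
              Finset.insert_subset (hin r hr) hsub
            have hseen' : ∀ B ∈ insert r.input seen, ∃ u' v y z', v ++ y ≠ [] ∧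
                g.Derives [Symbol.nonterminal g.initial]
                  (u'.map Symbol.terminal ++ [Symbol.nonterminal B] ++ z'.map Symbol.terminal) ∧
                g.Derives [Symbol.nonterminal B]
                  (v.map Symbol.terminal ++ [Symbol.nonterminal A'] ++ y.map Symbol.terminal) ∧
                u ++ pre = u' ++ v ∧ post ++ z = y ++ z' := by
              intro B hB
              rcases Finset.mem_insert.mp hB with rfl | hB
              · exact ⟨u, pre, post, z, hpp, hGood, hstep, rfl, rfl⟩
              · obtain ⟨u', v, y, z', hvy, hB1, hB2, hu, hz⟩ := hseen B hB
                refine ⟨u', v ++ pre, post ++ y, z', ?_, hB1, ?_, by rw [hu]; simp,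
                  by rw [hz]; simp⟩
                · intro hcontra
                  apply hvy
                  simp only [List.append_eq_nil_iff] at hcontra
                  simp [hcontra.1.1, hcontra.2.2]
                · have := hB2.trans (ctx_step hstep (v.map Symbol.terminal) (y.map Symbol.terminal))
                  simpa [List.map_append, List.append_assoc] using this
            have hlen' : m ^ (n - (insert r.input seen).card) < ch.yield.length := by
              have : (insert r.input seen).card = seen.card + 1 :=
                Finset.card_insert_of_notMem hAseen
              rw [this]
              have : n - (seen.card + 1) = n - seen.card - 1 := by omega
              rw [this]
              exact hchbig
            obtain ⟨B, u', v, x, y, z', h1, h2, h3, h4, h5⟩ :=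
              ih ch hchk hwfch A' hchA (u ++ pre) (post ++ z) hGood'
                (insert r.input seen) hsub' hseen' hlen'
            refine ⟨B, u', v, x, y, z', h1, h2, h3, h4, ?_⟩
            rw [hyt]
            simpa [List.append_assoc] using h5

end
end IterNCF
namespace IterNCF
section
open ContextFreeGrammar

universe uT uN
variable {T : Type uT} {g : ContextFreeGrammar.{uT} T}

lemma flatten_replicate_succ {α : Type*} (l : List α) (n : ℕ) :
    (List.replicate (n + 1) l).flatten = (List.replicate n l).flatten ++ l := by
  induction n with
  | zero => simp
  | succ n ih =>
    calc (List.replicate (n + 2) l).flatten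
        = l ++ (List.replicate (n + 1) l).flatten := by
          rw [List.replicate_succ, List.flatten_cons]
      _ = l ++ ((List.replicate n l).flatten ++ l) := by rw [ih]
      _ = (l ++ (List.replicate n l).flatten) ++ l := by rw [List.append_assoc]
      _ = (List.replicate (n + 1) l).flatten ++ l := by
          rw [List.replicate_succ, List.flatten_cons]

lemma count_flatten_replicate {α : Type*} [BEq α] (a : α) (l : List α) (i : ℕ) :
    ((List.replicate i l).flatten).count a = i * l.count a := by
  induction i with
  | zero => simp
  | succ i ih =>
    rw [List.replicate_succ, List.flatten_cons, List.count_append, ih]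
    ring

lemma pump_mid {B : g.NT} {v y : List T}
    (hB : g.Derives [Symbol.nonterminal B]
      (v.map Symbol.terminal ++ [Symbol.nonterminal B] ++ y.map Symbol.terminal)) :
    ∀ i : ℕ, g.Derives [Symbol.nonterminal B]
      (((List.replicate i v).flatten).map Symbol.terminal ++ [Symbol.nonterminal B]
        ++ ((List.replicate i y).flatten).map Symbol.terminal) := by
  intro i
  induction i with
  | zero => simpa using ContextFreeGrammar.Derives.refl [Symbol.nonterminal B]
  | succ i ihp =>
    have key : ((List.replicate (i + 1) v).flatten).map Symbol.terminal
          ++ [Symbol.nonterminal B] ++ ((List.replicate (i + 1) y).flatten).map Symbol.terminal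
        = ((List.replicate i v).flatten).map Symbol.terminal
          ++ (v.map Symbol.terminal ++ [Symbol.nonterminal B] ++ y.map Symbol.terminal)
          ++ ((List.replicate i y).flatten).map Symbol.terminal := by
      rw [flatten_replicate_succ v i, List.replicate_succ, List.flatten_cons]
      simp [List.map_append, List.append_assoc]
    rw [key]
    exact ihp.trans (ctx_step hB _ _)

lemma pump_words {B : g.NT} {u' v x y z' : List T}
    (h1 : g.Derives [Symbol.nonterminal g.initial]
      (u'.map Symbol.terminal ++ [Symbol.nonterminal B] ++ z'.map Symbol.terminal))
    (h2 : g.Derives [Symbol.nonterminal B]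
      (v.map Symbol.terminal ++ [Symbol.nonterminal B] ++ y.map Symbol.terminal))
    (h3 : g.Derives [Symbol.nonterminal B] (x.map Symbol.terminal)) :
    ∀ i : ℕ, (u' ++ (List.replicate i v).flatten ++ x
      ++ (List.replicate i y).flatten ++ z') ∈ g.language := by
  intro i
  rw [ContextFreeGrammar.mem_language_iff]
  have d2 := pump_mid h2 i
  have d23 := d2.trans (ctx_step h3 (((List.replicate i v).flatten).map Symbol.terminal)
    (((List.replicate i y).flatten).map Symbol.terminal))
  have full := h1.trans (ctx_step d23 (u'.map Symbol.terminal) (z'.map Symbol.terminal))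
  simpa [List.map_append, List.append_assoc] using full

end
end IterNCF

section ZWordFacts

private def zBody (k : ℕ) : List IterSym :=
  ((List.range k).map fun i => IterSym.c :: List.replicate (i + 1) IterSym.d).flatten

private lemma zBody_succ (k : ℕ) :
    zBody (k + 1) = zBody k ++ (IterSym.c :: List.replicate (k + 1) IterSym.d) := by
  simp [zBody, List.range_succ]

private lemma zWord_eq_body (k : ℕ) : zWord k = zBody k ++ [IterSym.e, IterSym.f] := rfl

private lemma count_c_zBody (k : ℕ) : (zBody k).count IterSym.c = k := by
  induction k with
  | zero => rfl
  | succ k ih => simp [zBody_succ, List.count_append, ih, List.count_cons, List.count_replicate]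

private lemma count_d_zBody (k : ℕ) : 2 * (zBody k).count IterSym.d = k * (k + 1) := by
  induction k with
  | zero => rfl
  | succ k ih =>
    rw [zBody_succ, List.count_append]
    have hA : (IterSym.c :: List.replicate (k + 1) IterSym.d).count IterSym.d = k + 1 := by
      simp [List.count_cons, List.count_replicate]
    rw [hA, Nat.mul_add, ih]
    ring

private lemma count_e_zBody (k : ℕ) : (zBody k).count IterSym.e = 0 := by
  induction k with
  | zero => rfl
  | succ k ih => simp [zBody_succ, List.count_append, ih, List.count_cons, List.count_replicate]

private lemma count_f_zBody (k : ℕ) : (zBody k).count IterSym.f = 0 := by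
  induction k with
  | zero => rfl
  | succ k ih => simp [zBody_succ, List.count_append, ih, List.count_cons, List.count_replicate]

private lemma count_c_zWord (k : ℕ) : (zWord k).count IterSym.c = k := by
  rw [zWord_eq_body, List.count_append, count_c_zBody]; rfl

private lemma count_d_zWord (k : ℕ) : 2 * (zWord k).count IterSym.d = k * (k + 1) := by
  rw [zWord_eq_body, List.count_append]
  have : ([IterSym.e, IterSym.f] : List IterSym).count IterSym.d = 0 := rfl
  rw [this, Nat.add_zero, count_d_zBody]

private lemma count_e_zWord (k : ℕ) : (zWord k).count IterSym.e = 1 := by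
  rw [zWord_eq_body, List.count_append, count_e_zBody]; rfl

private lemma count_f_zWord (k : ℕ) : (zWord k).count IterSym.f = 1 := by
  rw [zWord_eq_body, List.count_append, count_f_zBody]; rfl

private lemma lt_length_zWord (k : ℕ) : k < (zWord k).length := by
  have h1 : (zBody k).count IterSym.c ≤ (zBody k).length := List.count_le_length
  rw [count_c_zBody] at h1
  rw [zWord_eq_body, List.length_append]
  simp only [List.length_cons, List.length_nil]
  omega

end ZWordFacts

/-- The language `{ z_k : k ≥ 0 }` (an abstraction of `L(iter)`) is not context-free. -/
theorem iter_language_not_contextFree :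
    ¬ Language.IsContextFree {w : List IterSym | ∃ k : ℕ, w = zWord k} := by
  rintro ⟨g, hg⟩
  classical
  set m := (g.rules.sup fun r => r.output.length) + 1 with hmdef
  have hm : ∀ r ∈ g.rules, r.output.length ≤ m :=
    fun r hr =>
    le_trans (Finset.le_sup (f := fun r => r.output.length) hr) (Nat.le_succ _)
  have hm1 : 1 ≤ m := Nat.le_add_left 1 _
  set inputs := g.rules.image ContextFreeRule.input with hinpdef
  have hin : ∀ r ∈ g.rules, r.input ∈ inputs := fun r hr => Finset.mem_image_of_mem _ hr
  set n := inputs.card with hndef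
  set K := m ^ n with hKdef
  have hmem : zWord K ∈ g.language := by rw [hg]; exact ⟨K, rfl⟩
  rw [ContextFreeGrammar.mem_language_iff] at hmem
  obtain ⟨ts, hsym, hwfs, hyield⟩ := IterNCF.trees_of_derives hmem
  obtain ⟨t, rfl⟩ : ∃ t, ts = [t] := by
    cases ts with
    | nil => simp at hsym
    | cons t rest =>
      cases rest with
      | nil => exact ⟨t, rfl⟩
      | cons a b => simp at hsym
  have htsym : t.sym = Symbol.nonterminal g.initial := by simpa using hsym
  have hwf : IterNCF.WF g t := hwfs t (by simp)
  have htyield : t.yield = zWord K := by simpa using hyield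
  have hGood0 : g.Derives [Symbol.nonterminal g.initial]
      (([] : List IterSym).map Symbol.terminal ++ [Symbol.nonterminal g.initial]
        ++ ([] : List IterSym).map Symbol.terminal) := by
    simpa using ContextFreeGrammar.Derives.refl [Symbol.nonterminal g.initial]
  have hlen : m ^ (n - (∅ : Finset g.NT).card) < t.yield.length := by
    rw [htyield]
    simpa using lt_length_zWord K
  obtain ⟨B, u', v, x, y, z', hvy, hB, hBB, hx, heq⟩ :=
    IterNCF.extract m n hm hm1 inputs hin le_rfl t.size t le_rfl hwf g.initial htsym
      [] [] hGood0 ∅ (Finset.empty_subset _) (by simp) hlen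
  -- every pumped word is some `zWord`
  have hw : ∀ i : ℕ, ∃ kk : ℕ,
      u' ++ (List.replicate i v).flatten ++ x ++ (List.replicate i y).flatten ++ z'
        = zWord kk := by
    intro i
    have := IterNCF.pump_words hB hBB hx i
    rw [hg] at this
    exact this
  have hcount : ∀ (s : IterSym) (i : ℕ),
      (u' ++ (List.replicate i v).flatten ++ x ++ (List.replicate i y).flatten ++ z').count s
        = (u'.count s + x.count s + z'.count s) + i * (v.count s + y.count s) := by
    intro s i
    simp only [List.count_append, IterNCF.count_flatten_replicate]
    ring
  set a := v.count IterSym.c + y.count IterSym.c with hadef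
  set b := v.count IterSym.d + y.count IterSym.d with hbdef
  set C := u'.count IterSym.c + x.count IterSym.c + z'.count IterSym.c with hCdef
  set D := u'.count IterSym.d + x.count IterSym.d + z'.count IterSym.d with hDdef
  have he : v.count IterSym.e + y.count IterSym.e = 0 := by
    obtain ⟨k0, h0⟩ := hw 0
    obtain ⟨k1, h1⟩ := hw 1
    have c0 := congrArg (List.count IterSym.e) h0
    have c1 := congrArg (List.count IterSym.e) h1
    rw [hcount, count_e_zWord] at c0 c1
    omega
  have hf : v.count IterSym.f + y.count IterSym.f = 0 := by
    obtain ⟨k0, h0⟩ := hw 0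
    obtain ⟨k1, h1⟩ := hw 1
    have c0 := congrArg (List.count IterSym.f) h0
    have c1 := congrArg (List.count IterSym.f) h1
    rw [hcount, count_f_zWord] at c0 c1
    omega
  have hab : 1 ≤ a + b := by
    obtain ⟨s0, hs0⟩ := List.exists_mem_of_ne_nil (v ++ y) hvy
    have hpos : 0 < (v ++ y).count s0 := List.count_pos_iff.mpr hs0
    rw [List.count_append] at hpos
    cases s0 with
    | c => omega
    | d => omega
    | e => omega
    | f => omega
  -- the two count equations
  have hkc : ∀ i kk, (u' ++ (List.replicate i v).flatten ++ x
      ++ (List.replicate i y).flatten ++ z' = zWord kk) → kk = C + i * a := by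
    intro i kk hkk
    have := congrArg (List.count IterSym.c) hkk
    rw [hcount, count_c_zWord] at this
    rw [hCdef, hadef]
    omega
  have hkd : ∀ i kk, (u' ++ (List.replicate i v).flatten ++ x
      ++ (List.replicate i y).flatten ++ z' = zWord kk) →
      2 * (D + i * b) = kk * (kk + 1) := by
    intro i kk hkk
    have h2 := congrArg (fun l => 2 * List.count IterSym.d l) hkk
    rw [hcount, count_d_zWord] at h2
    rw [hDdef, hbdef, ← h2]
  rcases Nat.eq_zero_or_pos a with ha | ha
  · -- a = 0 forces b = 0, contradiction with a + b ≥ 1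
    obtain ⟨k0, h0⟩ := hw 0
    obtain ⟨k1, h1⟩ := hw 1
    have e0 := hkd 0 k0 h0
    have e1 := hkd 1 k1 h1
    have hc0 := hkc 0 k0 h0
    have hc1 := hkc 1 k1 h1
    rw [ha] at hc0 hc1
    simp only [Nat.mul_zero, Nat.add_zero] at hc0 hc1
    subst hc0; subst hc1
    omega
  · -- a ≥ 1: the quadratic beats the linear
    set i := 2 * D + 2 * b + 1 with hidef
    obtain ⟨kk, hkk⟩ := hw i
    have hc := hkc i kk hkk
    have hd := hkd i kk hkk
    subst hc
    have h1 : i ≤ C + i * a := by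
      calc i = i * 1 := (Nat.mul_one i).symm
        _ ≤ i * a := Nat.mul_le_mul_left i ha
        _ ≤ C + i * a := Nat.le_add_left _ _
    have h2 : i * (i + 1) ≤ (C + i * a) * (C + i * a + 1) :=
      Nat.mul_le_mul h1 (by omega)
    have hlt : 2 * (D + i * b) < i * (i + 1) := by nlinarith
    linarith
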